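/- For every f ∈ L²(ℝ) and every z ∈ ℂ, the integrand t ↦ f(t) e^{2πtz − πt² − (π/2)z²} is integrable over ℝ, so the Bargmann transform Bf(z) is well defined, and the function z ↦ Bf(z) is entire on ℂ. -/

import Mathlib

open MeasureTheory Complex
lemma integrable_exp_lin_sub_sq {b : ℝ} (hb : 0 < b) (c : ℝ) :
    Integrable (fun t : ℝ => Real.exp (c * t - b * t ^ 2)) := by
  have : (fun t : ℝ => Real.exp (c * t - b * t ^ 2)) =
      fun t : ℝ => Real.exp (c ^ 2 / (4 * b)) * Real.exp (-b * (t - c / (2 * b)) ^ 2) := by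
    funext t
    rw [← Real.exp_add]
    congr 1
    field_simp
    ring
  rw [this]
  exact ((integrable_exp_neg_mul_sq hb).comp_sub_right (c / (2 * b))).const_mul _

lemma memL2_exp (c : ℝ) :
    MemLp (fun t : ℝ => Real.exp (c * t - Real.pi * t ^ 2)) 2 (volume : Measure ℝ) := by
  refine (memLp_two_iff_integrable_sq ?_).mpr ?_
  · exact (Real.continuous_exp.comp (by continuity)).aestronglyMeasurable
  · have : (fun t : ℝ => Real.exp (c * t - Real.pi * t ^ 2) ^ 2) =
        fun t : ℝ => Real.exp ((2 * c) * t - (2 * Real.pi) * t ^ 2) := by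
      funext t
      rw [sq, ← Real.exp_add]
      congr 1
      ring
    rw [this]
    exact integrable_exp_lin_sub_sq (by positivity) _

lemma integrable_smul_L2 {E : Type*} [NormedAddCommGroup E] [NormedSpace ℝ E]
    {f : ℝ → E} {g : ℝ → ℝ}
    (hf : MemLp f 2 (volume : Measure ℝ)) (hg : MemLp g 2 (volume : Measure ℝ)) :
    Integrable (fun t => g t • f t) (volume : Measure ℝ) :=
  memLp_one_iff_integrable.mp (hf.smul hg (hpqr := ⟨by norm_num [ENNReal.inv_two_add_inv_two]⟩))

lemma re_lemma (z : ℂ) (t : ℝ) :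
    (2 * (Real.pi : ℂ) * t * z - (Real.pi : ℂ) * t ^ 2).re =
      2 * Real.pi * z.re * t - Real.pi * t ^ 2 := by
  simp [Complex.mul_re, ← Complex.ofReal_pow]
  ring

lemma bargmann_inner_integrable {f : ℝ → ℂ} (hf : MemLp f 2 (volume : Measure ℝ)) (z : ℂ) :
    Integrable (fun t : ℝ => f t *
      Complex.exp (2 * (Real.pi : ℂ) * t * z - (Real.pi : ℂ) * t ^ 2)) (volume : Measure ℝ) := by
  have hb : Integrable (fun t : ℝ =>
      Real.exp (2 * Real.pi * z.re * t - Real.pi * t ^ 2) • ‖f t‖) (volume : Measure ℝ) :=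
    integrable_smul_L2 hf.norm (memL2_exp _)
  refine Integrable.mono' hb ?_ ?_
  · exact hf.1.mul (Complex.continuous_exp.comp (by fun_prop)).aestronglyMeasurable
  · filter_upwards with t
    rw [norm_mul, Complex.norm_exp, re_lemma,
      smul_eq_mul, mul_comm]

lemma bargmann_inner_differentiable {f : ℝ → ℂ} (hf : MemLp f 2 (volume : Measure ℝ)) :
    Differentiable ℂ (fun z : ℂ => ∫ t : ℝ, f t *
      Complex.exp (2 * (Real.pi : ℂ) * t * z - (Real.pi : ℂ) * t ^ 2)) := by
  intro z₀
  set R : ℝ := ‖z₀‖ + 1 with hR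
  set S : ℝ := 2 * Real.pi * (R + 1) with hS
  have hmeas : ∀ z : ℂ, AEStronglyMeasurable
      (fun t : ℝ => f t * Complex.exp (2 * (Real.pi : ℂ) * t * z - (Real.pi : ℂ) * t ^ 2))
      (volume : Measure ℝ) := fun z =>
    hf.1.mul (Complex.continuous_exp.comp (by fun_prop)).aestronglyMeasurable
  have key := hasDerivAt_integral_of_dominated_loc_of_deriv_le (μ := (volume : Measure ℝ))
    (F := fun (z : ℂ) (t : ℝ) => f t *
      Complex.exp (2 * (Real.pi : ℂ) * t * z - (Real.pi : ℂ) * t ^ 2))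
    (F' := fun (z : ℂ) (t : ℝ) => f t *
      (Complex.exp (2 * (Real.pi : ℂ) * t * z - (Real.pi : ℂ) * t ^ 2) * (2 * (Real.pi : ℂ) * t)))
    (bound := fun t : ℝ =>
      (Real.exp (S * t - Real.pi * t ^ 2) + Real.exp ((-S) * t - Real.pi * t ^ 2)) • ‖f t‖)
    (x₀ := z₀) (Metric.ball_mem_nhds z₀ one_pos) (Filter.Eventually.of_forall hmeas)
    (bargmann_inner_integrable hf z₀)
    (hf.1.mul (Continuous.aestronglyMeasurable (by fun_prop)))
    ?_ ?_ ?_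
  · exact key.2.differentiableAt
  · -- bound
    filter_upwards with t
    intro z hz
    have hzR : ‖z‖ ≤ R := by
      have h1 := mem_ball_iff_norm.mp hz
      have h2 := norm_sub_norm_le z z₀
      rw [hR]; linarith
    have hre : |z.re| ≤ R := (Complex.abs_re_le_norm z).trans hzR
    rw [norm_mul, norm_mul, smul_eq_mul, mul_comm _ ‖f t‖]
    refine mul_le_mul_of_nonneg_left ?_ (norm_nonneg _)
    have hnorm2 : ‖(2 * (Real.pi : ℂ) * (t : ℂ))‖ = 2 * Real.pi * |t| := by
      rw [show (2 * (Real.pi : ℂ) * (t : ℂ)) = ((2 * Real.pi * t : ℝ) : ℂ) by push_cast; ring,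
        Complex.norm_real, Real.norm_eq_abs, abs_mul, abs_of_pos Real.two_pi_pos]
    rw [Complex.norm_exp, re_lemma, hnorm2]
    have h1 : 2 * Real.pi * z.re * t - Real.pi * t ^ 2 ≤
        2 * Real.pi * R * |t| - Real.pi * t ^ 2 := by
      have : z.re * t ≤ R * |t| := by
        calc z.re * t ≤ |z.re * t| := le_abs_self _
        _ = |z.re| * |t| := abs_mul _ _
        _ ≤ R * |t| := mul_le_mul_of_nonneg_right hre (abs_nonneg t)
      nlinarith [Real.pi_pos]
    have h2 : 2 * Real.pi * |t| ≤ Real.exp (2 * Real.pi * |t|) := by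
      have := Real.add_one_le_exp (2 * Real.pi * |t|)
      linarith
    calc Real.exp (2 * Real.pi * z.re * t - Real.pi * t ^ 2) * (2 * Real.pi * |t|)
        ≤ Real.exp (2 * Real.pi * R * |t| - Real.pi * t ^ 2) * Real.exp (2 * Real.pi * |t|) := by
          refine mul_le_mul (Real.exp_le_exp.mpr h1) h2 (by positivity) (Real.exp_nonneg _)
      _ = Real.exp (S * |t| - Real.pi * t ^ 2) := by
          rw [← Real.exp_add]; congr 1; rw [hS]; ring
      _ ≤ Real.exp (S * t - Real.pi * t ^ 2) + Real.exp ((-S) * t - Real.pi * t ^ 2) := by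
          rcases abs_cases t with ⟨h, _⟩ | ⟨h, _⟩
          · rw [h]; nlinarith [Real.exp_nonneg ((-S) * t - Real.pi * t ^ 2)]
          · rw [h, show S * -t = (-S) * t by ring]
            nlinarith [Real.exp_nonneg (S * t - Real.pi * t ^ 2)]
  · -- bound integrable
    exact integrable_smul_L2 hf.norm ((memL2_exp S).add (memL2_exp (-S)))
  · -- differentiability
    filter_upwards with t
    intro z hz
    have h : HasDerivAt (fun z : ℂ =>
        Complex.exp (2 * (Real.pi : ℂ) * t * z - (Real.pi : ℂ) * t ^ 2))
        (Complex.exp (2 * (Real.pi : ℂ) * t * z - (Real.pi : ℂ) * t ^ 2) *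
          (2 * (Real.pi : ℂ) * t)) z := by
      have := (((hasDerivAt_id z).const_mul (2 * (Real.pi : ℂ) * t)).sub_const
        ((Real.pi : ℂ) * t ^ 2)).cexp
      simpa using this
    simpa using h.const_mul (f t)


/-- The Bargmann transform of `f : ℝ → ℂ`:
`Bf(z) = 2^{1/4} ∫ f(t) e^{2πtz - πt² - (π/2)z²} dt`. -/
noncomputable def bargmannTransform (f : ℝ → ℂ) (z : ℂ) : ℂ :=
  (((2 : ℝ) ^ ((1 : ℝ) / 4) : ℝ) : ℂ) *
    ∫ t : ℝ, f t * Complex.exp (2 * (Real.pi : ℂ) * (t : ℂ) * z -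
      (Real.pi : ℂ) * (t : ℂ) ^ 2 - (Real.pi : ℂ) / 2 * z ^ 2)

/-- For `f ∈ L²(ℝ)`, the Bargmann integrand is integrable over `ℝ` for every `z ∈ ℂ`
(so `Bf(z)` is well defined), and `z ↦ Bf(z)` is entire. -/
theorem bargmann_well_defined_and_entire (f : ℝ → ℂ)
    (hf : MeasureTheory.MemLp f 2 (volume : Measure ℝ)) :
    (∀ z : ℂ, Integrable (fun t : ℝ => f t * Complex.exp (2 * (Real.pi : ℂ) * (t : ℂ) * z -
      (Real.pi : ℂ) * (t : ℂ) ^ 2 - (Real.pi : ℂ) / 2 * z ^ 2)) (volume : Measure ℝ)) ∧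
    Differentiable ℂ (bargmannTransform f) := by
  have hInt : ∀ z : ℂ, Integrable (fun t : ℝ => f t *
      Complex.exp (2 * (Real.pi : ℂ) * (t : ℂ) * z -
      (Real.pi : ℂ) * (t : ℂ) ^ 2 - (Real.pi : ℂ) / 2 * z ^ 2)) (volume : Measure ℝ) := by
    intro z
    have h := (bargmann_inner_integrable hf z).mul_const
      (Complex.exp (-((Real.pi : ℂ) / 2 * z ^ 2)))
    refine h.congr (Filter.Eventually.of_forall fun t => ?_)
    simp only [sub_eq_add_neg, Complex.exp_add]
    ring
  refine ⟨hInt, ?_⟩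
  have heq : bargmannTransform f = fun z : ℂ => (((2 : ℝ) ^ ((1 : ℝ) / 4) : ℝ) : ℂ) *
      ((∫ t : ℝ, f t * Complex.exp (2 * (Real.pi : ℂ) * t * z - (Real.pi : ℂ) * t ^ 2)) *
        Complex.exp (-((Real.pi : ℂ) / 2 * z ^ 2))) := by
    funext z
    unfold bargmannTransform
    rw [← integral_mul_const]
    congr 1
    refine integral_congr_ae (Filter.Eventually.of_forall fun t => ?_)
    simp only [sub_eq_add_neg, Complex.exp_add]
    ring
  rw [heq]
  refine Differentiable.const_mul ?_ _
  exact (bargmann_inner_differentiable hf).mul (Differentiable.cexp (by fun_prop))
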